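/- Suppose f is a density symmetric about μ (f(x) = f(2μ − x) for all x), s = nm, d_j = {(j-1)m+1,…,jm}, and the doubly stochastic misplacement matrix α satisfies α_{j,h} = α_{n-j+1, n-h+1} for all j,h. Define f_{[d_j]}(x) = (1/m) Σ_{h=1}^n Σ_{u∈d_h} α_{j,h} f_{(u:s)}(x). Then f_{[d_j]}(x) = f_{[d_{n-j+1}]}(2μ − x) for all x and all j = 1,…,n. -/

import Mathlib

open Finset MeasureTheory

/-- if f is symmetric about μ₀ and the doubly stochastic
misplacement matrix satisfies α_{j,h} = α_{n-j+1,n-h+1}, then the PROS component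
densities satisfy the reflection identity f_{[d_j]}(x) = f_{[d_{n-j+1}]}(2μ₀−x).
(Fin.rev is the 0-based version of j ↦ n-j+1.) -/
theorem pros_component_reflection
    (n m s : ℕ) (hn : 0 < n) (hm : 0 < m) (hs : s = n * m)
    (μ₀ : ℝ) (f F : ℝ → ℝ)
    (hfnn : ∀ x, 0 ≤ f x) (hfint : Integrable f)
    (hfnorm : ∫ x, f x = 1)
    (hfsym : ∀ x, f x = f (2 * μ₀ - x))
    (hF : ∀ x, F x = ∫ t in Set.Iic x, f t)
    (α : Fin n → Fin n → ℝ)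
    (hαnn : ∀ j h, 0 ≤ α j h)
    (hrow : ∀ j, ∑ h, α j h = 1)
    (hcol : ∀ h, ∑ j, α j h = 1)
    (hαsym : ∀ j h, α j h = α j.rev h.rev)
    (fd : Fin n → ℝ → ℝ)
    (hfd : ∀ j x, fd j x =
      (1 / (m : ℝ)) * ∑ h : Fin n, ∑ u ∈ Finset.Icc (h.1 * m + 1) ((h.1 + 1) * m),
        α j h * ((s : ℝ) * (Nat.choose (s - 1) (u - 1) : ℝ) *
          F x ^ (u - 1) * (1 - F x) ^ (s - u) * f x)) :
    ∀ j : Fin n, ∀ x, fd j x = fd j.rev (2 * μ₀ - x) := by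
  -- reflection identity for the cdf
  have hFsym : ∀ x, F (2 * μ₀ - x) = 1 - F x := by
    intro x
    have hpres : MeasurePreserving (fun t : ℝ => 2 * μ₀ - t) volume volume :=
      Measure.measurePreserving_sub_left volume (2 * μ₀)
    have hemb : MeasurableEmbedding (fun t : ℝ => 2 * μ₀ - t) :=
      (MeasurableEquiv.subLeft (2 * μ₀)).measurableEmbedding
    have key : (∫ t in Set.Iic (2 * μ₀ - x), f t) = ∫ t in Set.Ici x, f t := by
      calc (∫ t in Set.Iic (2 * μ₀ - x), f t)
          = ∫ t in Set.Iic (2 * μ₀ - x), f (2 * μ₀ - t) := by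
            exact setIntegral_congr_fun measurableSet_Iic fun t _ => hfsym t
        _ = ∫ t in (fun t : ℝ => 2 * μ₀ - t) ⁻¹' Set.Ici x, f (2 * μ₀ - t) := by
            congr 1
            ext t
            simp [le_sub_iff_add_le, sub_le_iff_le_add, le_sub_comm]
        _ = ∫ t in Set.Ici x, f t := by
            rw [← hemb.setIntegral_map, hpres.map_eq]
    rw [hF, hF, key, integral_Ici_eq_integral_Ioi, eq_sub_iff_add_eq, add_comm,
      intervalIntegral.integral_Iic_add_Ioi hfint.integrableOn hfint.integrableOn, hfnorm]
  intro j x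
  rw [hfd, hfd]
  congr 1
  -- reindex the outer sum by Fin.rev
  rw [← Equiv.sum_comp Fin.revPerm
    (fun h : Fin n => ∑ u ∈ Finset.Icc (h.1 * m + 1) ((h.1 + 1) * m),
      α j.rev h * ((s : ℝ) * (Nat.choose (s - 1) (u - 1) : ℝ) *
        F (2 * μ₀ - x) ^ (u - 1) * (1 - F (2 * μ₀ - x)) ^ (s - u) * f (2 * μ₀ - x)))]
  refine Finset.sum_congr rfl fun h _ => ?_
  simp only [Fin.revPerm_apply, ← hαsym j h]
  -- arithmetic facts making everything linear for omega
  have hrv : (h.rev : ℕ) = n - 1 - h.1 := by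
    rw [Fin.val_rev]
    omega
  have hA : ((n - 1 - h.1) + 1) * m = (n - 1 - h.1) * m + m := by
    rw [add_mul, one_mul]
  have hB : (h.1 + 1) * m = h.1 * m + m := by rw [add_mul, one_mul]
  have hS : s = (n - 1 - h.1) * m + (h.1 + 1) * m := by
    rw [hs, ← add_mul]
    congr 1
    have := h.is_lt
    omega
  rw [hrv]
  -- reindex the inner sum by u ↦ s + 1 - u
  refine Finset.sum_nbij' (i := fun u => s + 1 - u) (j := fun u => s + 1 - u)
    ?_ ?_ ?_ ?_ ?_
  · intro u hu
    simp only [Finset.mem_Icc] at *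
    omega
  · intro u hu
    simp only [Finset.mem_Icc] at *
    omega
  · intro u hu
    simp only [Finset.mem_Icc] at hu
    omega
  · intro u hu
    simp only [Finset.mem_Icc] at hu
    omega
  · intro u hu
    rw [Finset.mem_Icc] at hu
    have hu1 : 1 ≤ u := by omega
    have hus : u ≤ s := by omega
    have e1 : (s + 1 - u) - 1 = s - u := by omega
    have e2 : s - (s + 1 - u) = u - 1 := by omega
    have e3 : s - u = (s - 1) - (u - 1) := by omega
    have echoose : Nat.choose (s - 1) ((s + 1 - u) - 1) = Nat.choose (s - 1) (u - 1) := by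
      rw [e1, e3, Nat.choose_symm (by omega)]
    rw [echoose, e1, e2, hFsym x, ← hfsym x]
    ring
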